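/- There exists a constant $c>0$ such that for all $n\in\mathbb{N}$ and all $w\in\mathbb{Z}_n^d\setminus\{0\}$: $\frac{1}{\|\pi w\|^4} \le n^{-4}\Big(\sum_{i=1}^d \sin^2\big(\tfrac{\pi w_i}{n}\big)\Big)^{-2} \le \Big(\frac{1}{\|\pi w\|^2}+\frac{c}{n^2}\Big)^2$. -/

import Mathlib

open scoped BigOperators

private lemma sin_lb_aux {x : ℝ} (hx : 0 ≤ x) : x - x ^ 3 / 6 ≤ Real.sin x := by
  have hdiff : Differentiable ℝ (fun y : ℝ => Real.sin y + y ^ 3 / 6 - y) := by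
    fun_prop
  have hmono : Monotone (fun y : ℝ => Real.sin y + y ^ 3 / 6 - y) := by
    apply monotone_of_deriv_nonneg hdiff
    intro y
    have hd : HasDerivAt (fun y : ℝ => Real.sin y + y ^ 3 / 6 - y)
        (Real.cos y + (3 : ℕ) * y ^ 2 / 6 - 1) y := by
      exact (((Real.hasDerivAt_sin y).add ((hasDerivAt_pow 3 y).div_const 6)).sub
        (hasDerivAt_id y)).congr_deriv (by norm_num)
    rw [hd.deriv]
    have := Real.one_sub_sq_div_two_le_cos (x := y)
    push_cast
    nlinarith
  have h := hmono hx
  simp only [Real.sin_zero] at h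
  norm_num at h
  linarith

private lemma sin_sq_lb_aux {x : ℝ} (hx : 0 ≤ x) :
    x ^ 2 - x ^ 4 / 3 ≤ Real.sin x ^ 2 := by
  have h1 := sin_lb_aux hx
  have h2 := Real.sin_le hx
  rcases le_total 0 (x + Real.sin x) with h | h
  · nlinarith [mul_le_mul_of_nonneg_right
      (show x - Real.sin x ≤ x ^ 3 / 6 from by linarith) h,
      mul_nonneg (pow_nonneg hx 3) (sub_nonneg.2 h2)]
  · nlinarith [mul_nonpos_of_nonneg_of_nonpos
      (show (0:ℝ) ≤ x - Real.sin x from by linarith) h, sq_nonneg (x ^ 2)]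

private lemma sin_sq_lb (x : ℝ) : x ^ 2 - x ^ 4 / 3 ≤ Real.sin x ^ 2 := by
  rcases le_total 0 x with hx | hx
  · exact sin_sq_lb_aux hx
  · have := sin_sq_lb_aux (neg_nonneg.2 hx)
    rw [Real.sin_neg] at this
    nlinarith [this]

private lemma jordan_sq {x : ℝ} (hx : |x| ≤ Real.pi / 2) :
    (2 / Real.pi) ^ 2 * x ^ 2 ≤ Real.sin x ^ 2 := by
  have h := Real.mul_le_sin (abs_nonneg x) hx
  have h3 : (2 / Real.pi * |x|) ^ 2 ≤ Real.sin |x| ^ 2 :=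
    pow_le_pow_left₀ (by positivity) h 2
  have h2 : Real.sin |x| ^ 2 = Real.sin x ^ 2 := by
    rcases abs_choice x with h' | h' <;> rw [h'] <;> simp [Real.sin_neg]
  rw [h2] at h3
  calc (2 / Real.pi) ^ 2 * x ^ 2 = (2 / Real.pi * |x|) ^ 2 := by
        rw [mul_pow, sq_abs]
    _ ≤ _ := h3

/-- Two-sided bound on the inverse squared discrete-Laplacian eigenvalues:
there is `c > 0` such that for all `n ∈ ℕ` and `w ∈ ℤ_n^d \ {0}`,
`1/‖πw‖⁴ ≤ n⁻⁴ (∑ᵢ sin²(πwᵢ/n))⁻² ≤ (1/‖πw‖² + c/n²)²`. -/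
theorem stmt4 (d : ℕ) (hd : 1 ≤ d) :
    ∃ c : ℝ, 0 < c ∧ ∀ n : ℕ, 1 ≤ n → ∀ w : Fin d → ℤ, w ≠ 0 →
      (∀ i, 2 * |w i| ≤ (n : ℤ)) →
      1 / (Real.pi ^ 2 * ∑ i, ((w i : ℝ)) ^ 2) ^ 2
          ≤ (n : ℝ)⁻¹ ^ 4 * ((∑ i, Real.sin (Real.pi * (w i : ℝ) / n) ^ 2) ^ 2)⁻¹ ∧
        (n : ℝ)⁻¹ ^ 4 * ((∑ i, Real.sin (Real.pi * (w i : ℝ) / n) ^ 2) ^ 2)⁻¹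
          ≤ (1 / (Real.pi ^ 2 * ∑ i, ((w i : ℝ)) ^ 2) + c / (n : ℝ) ^ 2) ^ 2 := by
  have hpi := Real.pi_pos
  refine ⟨Real.pi ^ 2 / 12, by positivity, ?_⟩
  intro n hn w hw hwb
  have hn0 : (0 : ℝ) < n := by exact_mod_cast hn
  set W : ℝ := ∑ i, ((w i : ℝ)) ^ 2 with hWdef
  set Q : ℝ := ∑ i, Real.sin (Real.pi * (w i : ℝ) / n) ^ 2 with hQdef
  set N : ℝ := (n : ℝ) ^ 2 with hNdef
  have hN0 : (0 : ℝ) < N := by positivity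
  -- W ≥ 1
  have hW1 : (1 : ℝ) ≤ W := by
    obtain ⟨i, hi⟩ := Function.ne_iff.1 hw
    have hi0 : w i ≠ 0 := by simpa using hi
    have hi' : (1 : ℝ) ≤ ((w i : ℝ)) ^ 2 := by
      have : (1 : ℤ) ≤ (w i) ^ 2 := by
        rcases hi0.lt_or_gt with h | h <;> nlinarith
      exact_mod_cast this
    calc (1 : ℝ) ≤ ((w i : ℝ)) ^ 2 := hi'
      _ ≤ W := Finset.single_le_sum (f := fun j => ((w j : ℝ)) ^ 2)
          (fun j _ => sq_nonneg _) (Finset.mem_univ i)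
  have hW0 : (0 : ℝ) < W := lt_of_lt_of_le one_pos hW1
  set S : ℝ := Real.pi ^ 2 * W / N with hSdef
  have hS0 : (0 : ℝ) < S := by positivity
  -- |x i| ≤ π/2
  have hxb : ∀ i, |Real.pi * (w i : ℝ) / n| ≤ Real.pi / 2 := by
    intro i
    have h1 : (|w i| : ℝ) ≤ (n : ℝ) / 2 := by
      have := hwb i
      have : (2 : ℝ) * |(w i : ℝ)| ≤ (n : ℝ) := by
        rw [← Int.cast_abs]
        exact_mod_cast this
      linarith
    rw [abs_div, abs_mul, abs_of_pos hpi, abs_of_pos hn0]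
    rw [div_le_div_iff₀ hn0 two_pos]
    nlinarith [abs_nonneg ((w i : ℝ))]
  -- sum of x_i^2 equals S
  have hSsum : ∑ i, (Real.pi * (w i : ℝ) / n) ^ 2 = S := by
    rw [hSdef, hNdef, hWdef, Finset.mul_sum, Finset.sum_div]
    refine Finset.sum_congr rfl fun i _ => ?_
    field_simp
  -- Q ≤ S
  have hQS : Q ≤ S := by
    rw [← hSsum]
    exact Finset.sum_le_sum fun i _ => Real.sin_sq_le_sq
  -- Jordan lower bound
  have hQge : (2 / Real.pi) ^ 2 * S ≤ Q := by
    rw [← hSsum, Finset.mul_sum]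
    exact Finset.sum_le_sum fun i _ => jordan_sq (hxb i)
  have hQ0 : (0 : ℝ) < Q := lt_of_lt_of_le (by positivity) hQge
  -- S - Q ≤ S^2/3
  have hSQ : S - Q ≤ S ^ 2 / 3 := by
    have h1 : S - Q ≤ ∑ i, (Real.pi * (w i : ℝ) / n) ^ 4 / 3 := by
      rw [← hSsum, hQdef, ← Finset.sum_sub_distrib]
      refine Finset.sum_le_sum fun i _ => ?_
      have := sin_sq_lb (Real.pi * (w i : ℝ) / n)
      linarith
    have h2 : ∑ i, (Real.pi * (w i : ℝ) / n) ^ 4 ≤ S ^ 2 := by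
      rw [← hSsum, sq, Finset.sum_mul]
      refine Finset.sum_le_sum fun i _ => ?_
      have hle : (Real.pi * (w i : ℝ) / n) ^ 2 ≤ ∑ j, (Real.pi * (w j : ℝ) / n) ^ 2 :=
        Finset.single_le_sum (f := fun j => (Real.pi * (w j : ℝ) / n) ^ 2)
          (fun j _ => sq_nonneg _) (Finset.mem_univ i)
      calc (Real.pi * (w i : ℝ) / n) ^ 4
          = (Real.pi * (w i : ℝ) / n) ^ 2 * (Real.pi * (w i : ℝ) / n) ^ 2 := by ring
        _ ≤ (Real.pi * (w i : ℝ) / n) ^ 2 * ∑ j, (Real.pi * (w j : ℝ) / n) ^ 2 :=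
            mul_le_mul_of_nonneg_left hle (sq_nonneg _)
    rw [← Finset.sum_div] at h1
    linarith
  -- rewrite π² W = N S
  have hNS : Real.pi ^ 2 * W = N * S := by
    rw [hSdef]; field_simp
  -- LHS expression equals 1/(N*Q)^2
  have hLHS : (n : ℝ)⁻¹ ^ 4 * ((Q) ^ 2)⁻¹ = 1 / (N * Q) ^ 2 := by
    rw [hNdef]
    field_simp
  have hpisq : (2 / Real.pi) ^ 2 = 4 / Real.pi ^ 2 := by rw [div_pow]; norm_num
  clear_value S
  clear_value W Q N
  constructor
  · rw [hLHS, hNS]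
    apply one_div_le_one_div_of_le (by positivity)
    have : N * Q ≤ N * S := mul_le_mul_of_nonneg_left hQS hN0.le
    exact pow_le_pow_left₀ (by positivity) this 2
  · rw [hLHS]
    have key : 1 / (N * Q) ≤ 1 / (Real.pi ^ 2 * W) + Real.pi ^ 2 / 12 / N := by
      rw [hNS]
      have hkey2 : 1 / Q ≤ 1 / S + Real.pi ^ 2 / 12 := by
        rw [div_add_div _ _ (ne_of_gt hS0) (by norm_num), div_le_div_iff₀ hQ0 (by positivity)]
        have hmul : 4 * S ^ 2 ≤ Real.pi ^ 2 * (S * Q) := by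
          have h := mul_le_mul_of_nonneg_left hQge (by positivity : (0:ℝ) ≤ Real.pi ^ 2 * S)
          rw [hpisq] at h
          calc 4 * S ^ 2 = Real.pi ^ 2 * S * (4 / Real.pi ^ 2 * S) := by
                field_simp
            _ ≤ Real.pi ^ 2 * S * Q := h
            _ = Real.pi ^ 2 * (S * Q) := by ring
        nlinarith
      calc 1 / (N * Q) = (1 / Q) * (1 / N) := by
            rw [one_div (N * Q), mul_comm N Q, mul_inv, one_div, one_div]
        _ ≤ (1 / S + Real.pi ^ 2 / 12) * (1 / N) :=
            mul_le_mul_of_nonneg_right hkey2 (by positivity)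
        _ = 1 / (N * S) + Real.pi ^ 2 / 12 / N := by field_simp
    have h0 : 0 ≤ 1 / (N * Q) := by positivity
    calc 1 / (N * Q) ^ 2 = (1 / (N * Q)) ^ 2 := by rw [one_div_pow]
      _ ≤ (1 / (Real.pi ^ 2 * W) + Real.pi ^ 2 / 12 / N) ^ 2 :=
          pow_le_pow_left₀ h0 key 2
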